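/- Suppose t_a satisfies causality and strict fifoness, and let H_a(Y)(h) := h + t_a(Y)(h). For a measure Y on ℝ, a measure Y^r ≤ Y, define the pushforward flow ψ(Y^r, Y)(J) := Y^r(H_a(Y)⁻¹(J)). Then for every h ∈ ℝ, the restriction of ψ(Y^r, Y) to (-∞, H_a(Y)(h)] equals the restriction of ψ(Y^r|_h, Y|_h) to (-∞, H_a(Y|_h)(h)]. -/

import Mathlib

open MeasureTheory Set

/-- Under causality and strict fifoness, the flow leaving an arc, restricted to exit
times `≤ H_a(Y)(h)`, only depends on the flow entering the arc before `h`: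
`ψ(Yʳ, Y)|_{H_a(Y)(h)} = ψ(Yʳ|_h, Y|_h)|_{H_a(Y|_h)(h)}`, where `ψ(Yʳ, Y)` is the
pushforward of `Yʳ` under the exit time function `H_a(Y)`. -/
theorem flowing_restrict_eq (ta : Measure ℝ → C(ℝ, ℝ))
    (hcaus : ∀ (Y : Measure ℝ) (h : ℝ), ta (Y.restrict (Iic h)) h = ta Y h)
    (hfifo : ∀ (Y : Measure ℝ) (h₁ h₂ : ℝ), h₁ < h₂ → Y (Icc h₁ h₂) ≠ 0 →
      h₁ + ta Y h₁ < h₂ + ta Y h₂)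
    (Y Yr : Measure ℝ) [IsFiniteMeasure Y] [IsFiniteMeasure Yr] (hle : Yr ≤ Y) (h : ℝ) :
    (Yr.map (fun h' => h' + ta Y h')).restrict (Iic (h + ta Y h))
      = ((Yr.restrict (Iic h)).map
            (fun h' => h' + ta (Y.restrict (Iic h)) h')).restrict
          (Iic (h + ta (Y.restrict (Iic h)) h)) := by
  have hgm : Measurable (fun h' => h' + ta Y h') :=
    (continuous_id.add (ta Y).continuous).measurable
  -- causality for all x ≤ h
  have key : ∀ x ≤ h, ta (Y.restrict (Iic h)) x = ta Y x := by
    intro x hx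
    have h1 := hcaus (Y.restrict (Iic h)) x
    rw [Measure.restrict_restrict measurableSet_Iic, Iic_inter_Iic,
      min_eq_left hx] at h1
    rw [← h1, hcaus Y x]
  -- rewrite RHS cutoff and map
  rw [key h le_rfl]
  have hmapcongr : (Yr.restrict (Iic h)).map
      (fun h' => h' + ta (Y.restrict (Iic h)) h')
      = (Yr.restrict (Iic h)).map (fun h' => h' + ta Y h') := by
    apply Measure.map_congr
    refine (ae_restrict_iff' measurableSet_Iic).2 (ae_of_all _ fun x hx => ?_)
    simp [key x hx]
  rw [hmapcongr]
  -- the key null set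
  have hB : Y {x | h < x ∧ Y (Ioc h x) = 0} = 0 := by
    set B := {x | h < x ∧ Y (Ioc h x) = 0} with hBdef
    set C := {q : ℚ | (q : ℝ) ∈ B} with hC
    set U := ⋃ q ∈ C, Ioc h (q : ℝ) with hU
    have hUnull : Y U = 0 :=
      (measure_biUnion_null_iff (Set.to_countable C)).2 fun q hq => hq.2
    have hD' : ∀ x ∈ B \ U, ∀ y ∈ B \ U, x < y → False := by
      intro x hx y hy hxy
      obtain ⟨q, hq1, hq2⟩ := exists_rat_btwn hxy
      have hqB : (q : ℝ) ∈ B :=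
        ⟨hx.1.1.trans hq1, measure_mono_null (Ioc_subset_Ioc_right hq2.le) hy.1.2⟩
      exact hx.2 (mem_biUnion hqB ⟨hx.1.1, hq1.le⟩)
    have hD : (B \ U).Subsingleton := by
      intro x hx y hy
      by_contra hne
      rcases lt_or_gt_of_ne hne with h' | h'
      · exact hD' x hx y hy h'
      · exact hD' y hy x hx h'
    have hDnull : Y (B \ U) = 0 := by
      rcases hD.eq_empty_or_singleton with he | ⟨x, he⟩
      · simp [he]
      · have hx : x ∈ B \ U := he ▸ mem_singleton x
        rw [he]
        exact measure_mono_null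
          (singleton_subset_iff.mpr (mem_Ioc.mpr ⟨hx.1.1, le_rfl⟩)) hx.1.2
    have hle0 : Y B ≤ 0 := calc
      Y B ≤ Y (U ∪ (B \ U)) := by
          refine measure_mono fun x hx => ?_
          by_cases hxu : x ∈ U
          exacts [Or.inl hxu, Or.inr ⟨hx, hxu⟩]
        _ ≤ Y U + Y (B \ U) := measure_union_le _ _
        _ = 0 := by rw [hUnull, hDnull, add_zero]
    exact le_antisymm hle0 zero_le
  -- the part of Yr above h lands strictly after the cutoff
  have hA : Yr ((fun h' => h' + ta Y h') ⁻¹' Iic (h + ta Y h) ∩ (Iic h)ᶜ) = 0 := by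
    have hsub : (fun h' => h' + ta Y h') ⁻¹' Iic (h + ta Y h) ∩ (Iic h)ᶜ
        ⊆ {x | h < x ∧ Y (Ioc h x) = 0} := by
      intro x hx
      have hx1 : h < x := not_le.1 hx.2
      refine ⟨hx1, ?_⟩
      by_contra hY
      have hIcc : Y (Icc h x) ≠ 0 :=
        fun hc => hY (measure_mono_null Ioc_subset_Icc_self hc)
      exact absurd hx.1 (not_le.2 (hfifo Y h x hx1 hIcc))
    have h1 : Yr ((fun h' => h' + ta Y h') ⁻¹' Iic (h + ta Y h) ∩ (Iic h)ᶜ)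
        ≤ Y {x | h < x ∧ Y (Ioc h x) = 0} :=
      le_trans (measure_mono hsub) (Measure.le_iff'.1 hle _)
    exact le_antisymm (hB ▸ h1) zero_le
  -- split Yr and conclude
  conv_lhs => rw [← Measure.restrict_add_restrict_compl (μ := Yr)
    (measurableSet_Iic (a := h)), Measure.map_add _ _ hgm, Measure.restrict_add]
  have hzero : (((Yr.restrict (Iic h)ᶜ)).map
      (fun h' => h' + ta Y h')).restrict (Iic (h + ta Y h)) = 0 := by
    rw [Measure.restrict_eq_zero, Measure.map_apply hgm measurableSet_Iic,
      Measure.restrict_apply (hgm measurableSet_Iic)]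
    exact hA
  rw [hzero, add_zero]
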